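/- Let p be a prime, r ∈ {0,…,p−1}, and f a polynomial with coefficients in ℤ_p such that p divides f(r). Then the following are equivalent: (i) for every k ∈ ℕ and all m, n ∈ ℤ_p with m ≡ r (mod p) and n ≡ r (mod p): m ≡ n (mod p^k) if and only if f(m) ≡ f(n) (mod p^k); (ii) there exist a ∈ ℤ_p and a polynomial g with coefficients in ℤ_p such that a ≡ r (mod p), f(a) = 0, a is the only root of f in the residue class of r (every b ∈ ℤ_p with b ≡ r (mod p) and f(b) = 0 equals a), f(X) = (X − a)·g(X), and g(r) is a unit of ℤ_p. -/

import Mathlib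

open Polynomial

private lemma eq_of_forall_pow_dvd' {p : ℕ} [Fact p.Prime] {x : ℤ_[p]}
    (h : ∀ k : ℕ, (p : ℤ_[p]) ^ k ∣ x) : x = 0 := by
  have hle : ∀ k : ℕ, ‖x‖ ≤ ‖(p : ℤ_[p])‖ ^ k := by
    intro k
    obtain ⟨c, hc⟩ := h k
    rw [hc]
    calc ‖(p:ℤ_[p])^k * c‖ = ‖(p:ℤ_[p])‖^k * ‖c‖ := by
          rw [norm_mul, norm_pow]
    _ ≤ ‖(p:ℤ_[p])‖^k * 1 := by gcongr; exact PadicInt.norm_le_one c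
    _ = _ := mul_one _
  have hplt : ‖(p : ℤ_[p])‖ < 1 := by
    rw [PadicInt.norm_p]
    exact inv_lt_one_of_one_lt₀ (by exact_mod_cast (Fact.out : p.Prime).one_lt)
  have h0 : Filter.Tendsto (fun k : ℕ => ‖(p : ℤ_[p])‖ ^ k) Filter.atTop (nhds 0) :=
    tendsto_pow_atTop_nhds_zero_of_lt_one (norm_nonneg _) hplt
  have : ‖x‖ ≤ 0 := ge_of_tendsto h0 (Filter.Eventually.of_forall hle)
  simpa using le_antisymm this (norm_nonneg x)

private lemma isUnit_of_near' {p : ℕ} [Fact p.Prime] {x y : ℤ_[p]}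
    (hx : IsUnit x) (hd : ‖y - x‖ < 1) : IsUnit y := by
  rw [PadicInt.isUnit_iff] at hx ⊢
  by_contra hy
  have hy1 : ‖y‖ < 1 := lt_of_le_of_ne (PadicInt.norm_le_one y) hy
  have : ‖x‖ < 1 := by
    have : x = y + -(y - x) := by ring
    rw [this]
    exact lt_of_le_of_lt (PadicInt.nonarchimedean _ _)
      (max_lt hy1 (by rwa [norm_neg]))
  exact absurd hx (ne_of_lt this)

private lemma norm_le_of_dvd' {p : ℕ} [Fact p.Prime] {x y : ℤ_[p]}
    (h : x ∣ y) : ‖y‖ ≤ ‖x‖ := by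
  obtain ⟨c, rfl⟩ := h
  calc ‖x * c‖ = ‖x‖ * ‖c‖ := norm_mul x c
  _ ≤ ‖x‖ * 1 := by gcongr; exact PadicInt.norm_le_one c
  _ = ‖x‖ := mul_one _

/-- **Characterization of `(p,r)`-suitable polynomials via their unique root**
(`TSuitFUnRootEq`). Let `f ∈ ℤ_p[x]` with `p ∣ f(r)`. Then `f` is `(p,r)`-suitable
(for every `k` and all `m, n ≡ r (mod p)`: `m ≡ n (mod p^k) ↔ f(m) ≡ f(n) (mod p^k)`)
iff there are `a ∈ ℤ_p` and `g ∈ ℤ_p[x]` with `a ≡ r (mod p)`, `f(a) = 0`, `a` the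
only root of `f` in the residue class of `r`, `f = (X − a)·g`, and `g(r)` a unit. -/
theorem stmt11 (p : ℕ) [Fact p.Prime] (r : ℕ) (hr : r < p) (f : Polynomial ℤ_[p])
    (hfr : (p : ℤ_[p]) ∣ f.eval (r : ℤ_[p])) :
    (∀ k : ℕ, ∀ m n : ℤ_[p],
        (p : ℤ_[p]) ∣ m - (r : ℤ_[p]) → (p : ℤ_[p]) ∣ n - (r : ℤ_[p]) →
        ((p : ℤ_[p]) ^ k ∣ m - n ↔ (p : ℤ_[p]) ^ k ∣ f.eval m - f.eval n)) ↔
    (∃ (a : ℤ_[p]) (g : Polynomial ℤ_[p]),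
        (p : ℤ_[p]) ∣ a - (r : ℤ_[p]) ∧ f.eval a = 0 ∧
        (∀ b : ℤ_[p], (p : ℤ_[p]) ∣ b - (r : ℤ_[p]) → f.eval b = 0 → b = a) ∧
        f = (Polynomial.X - Polynomial.C a) * g ∧ IsUnit (g.eval (r : ℤ_[p]))) := by
  have hple : (1:ℝ) < p := by exact_mod_cast (Fact.out : p.Prime).one_lt
  have hpnorm : ‖(p : ℤ_[p])‖ < 1 := by
    rw [PadicInt.norm_p]; exact inv_lt_one_of_one_lt₀ hple
  have hpne : (p : ℤ_[p]) ≠ 0 := by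
    intro h
    rw [h, norm_zero] at hpnorm
    have : (0:ℝ) < ‖(0:ℤ_[p])‖ := by
      rw [← h, PadicInt.norm_p]; positivity
    simp [norm_zero] at this
  constructor
  · intro hsuit
    -- Step 1: the derivative at r is a unit
    have hderiv : ‖f.derivative.eval (r : ℤ_[p])‖ = 1 := by
      obtain ⟨c, hc⟩ := f.binomExpansion (r : ℤ_[p]) (p : ℤ_[p])
      have hm : (p : ℤ_[p]) ∣ ((r : ℤ_[p]) + p) - r := by
        rw [add_sub_cancel_left]
      have hn : (p : ℤ_[p]) ∣ (r : ℤ_[p]) - r := by simp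
      have h2 := hsuit 2 ((r : ℤ_[p]) + p) (r : ℤ_[p]) hm hn
      have hnot : ¬ (p : ℤ_[p]) ^ 2 ∣ ((r : ℤ_[p]) + p) - r := by
        rw [add_sub_cancel_left]
        rintro ⟨u, hu⟩
        have hu1 : (1:ℤ_[p]) = (p:ℤ_[p]) * u :=
          mul_left_cancel₀ hpne
            (show (p:ℤ_[p]) * 1 = (p:ℤ_[p]) * ((p:ℤ_[p]) * u) by linear_combination hu)
        have : IsUnit (p : ℤ_[p]) := IsUnit.of_mul_eq_one (a := (p : ℤ_[p])) u hu1.symm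
        rw [PadicInt.isUnit_iff] at this
        exact absurd this (ne_of_lt hpnorm)
      have hnotf : ¬ (p : ℤ_[p]) ^ 2 ∣ f.eval ((r : ℤ_[p]) + p) - f.eval (r : ℤ_[p]) :=
        fun h => hnot (h2.mpr h)
      have hnd : ¬ (p : ℤ_[p]) ∣ f.derivative.eval (r : ℤ_[p]) := by
        rintro ⟨d, hd⟩
        apply hnotf
        refine ⟨d + c, ?_⟩
        rw [hc, hd]; ring
      rw [← PadicInt.norm_lt_one_iff_dvd, not_lt] at hnd
      exact le_antisymm (PadicInt.norm_le_one _) hnd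
    -- Step 2: Hensel's lemma gives the root a
    have hnorm : ‖f.eval (r : ℤ_[p])‖ < ‖f.derivative.eval (r : ℤ_[p])‖ ^ 2 := by
      rw [hderiv, one_pow]
      exact (PadicInt.norm_lt_one_iff_dvd _).mpr hfr
    obtain ⟨a, hfa, hdist, hda, _⟩ := hensels_lemma hnorm
    simp only [Polynomial.coe_aeval_eq_eval] at hfa hdist hda
    rw [hderiv] at hdist
    have har : (p : ℤ_[p]) ∣ a - (r : ℤ_[p]) :=
      (PadicInt.norm_lt_one_iff_dvd _).mp hdist
    -- Step 3: factor f
    obtain ⟨g, hg⟩ := (dvd_iff_isRoot (p := f) (a := a)).mpr hfa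
    -- g(a) = f'(a), a unit
    have hga : f.derivative.eval a = g.eval a := by
      rw [hg, derivative_mul, derivative_sub, derivative_X, derivative_C]
      simp
    have hgau : IsUnit (g.eval a) := by
      rw [PadicInt.isUnit_iff, ← hga, hda, hderiv]
    -- g(r) is a unit
    have hgru : IsUnit (g.eval (r : ℤ_[p])) := by
      apply isUnit_of_near' hgau
      calc ‖g.eval (r:ℤ_[p]) - g.eval a‖ ≤ ‖(r:ℤ_[p]) - a‖ :=
            norm_le_of_dvd' (sub_dvd_eval_sub _ _ _)
      _ = ‖a - (r:ℤ_[p])‖ := by rw [← norm_neg]; ring_nf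
      _ < 1 := hdist
    refine ⟨a, g, har, hfa, ?_, hg, hgru⟩
    -- uniqueness
    intro b hb hfb
    have : ∀ k : ℕ, (p : ℤ_[p]) ^ k ∣ b - a := by
      intro k
      exact (hsuit k b a hb har).mpr (by rw [hfb, hfa, sub_zero]; exact dvd_zero _)
    exact sub_eq_zero.mp (eq_of_forall_pow_dvd' this)
  · rintro ⟨a, g, ha, hfa, _, hg, hgr⟩ k m n hm hn
    -- g evaluated anywhere in the residue class is a unit
    have hunit : ∀ x : ℤ_[p], (p : ℤ_[p]) ∣ x - (r : ℤ_[p]) → IsUnit (g.eval x) := by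
      intro x hx
      apply isUnit_of_near' hgr
      calc ‖g.eval x - g.eval (r:ℤ_[p])‖ ≤ ‖x - (r:ℤ_[p])‖ :=
            norm_le_of_dvd' (sub_dvd_eval_sub _ _ _)
      _ < 1 := (PadicInt.norm_lt_one_iff_dvd _).mpr hx
    obtain ⟨c, hc⟩ := sub_dvd_eval_sub m n g
    have key : f.eval m - f.eval n = (m - n) * (g.eval m + (n - a) * c) := by
      have h1 : f.eval m = (m - a) * g.eval m := by rw [hg]; simp
      have h2 : f.eval n = (n - a) * g.eval n := by rw [hg]; simp
      have h3 : g.eval m - g.eval n = (m - n) * c := hc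
      have h4 : g.eval m = g.eval n + (m - n) * c := by rw [← h3]; ring
      rw [h1, h2, h4]; ring
    have hu : IsUnit (g.eval m + (n - a) * c) := by
      apply isUnit_of_near' (hunit m hm)
      rw [add_sub_cancel_left]
      calc ‖(n - a) * c‖ = ‖n - a‖ * ‖c‖ := norm_mul _ _
      _ ≤ ‖n - a‖ * 1 := by gcongr; exact PadicInt.norm_le_one c
      _ = ‖n - a‖ := mul_one _
      _ < 1 := by
          rw [PadicInt.norm_lt_one_iff_dvd]
          have : n - a = (n - (r:ℤ_[p])) - (a - (r:ℤ_[p])) := by ring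
          rw [this]; exact dvd_sub hn ha
    rw [key]
    exact (IsUnit.dvd_mul_right hu).symm
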